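/- The number e_p(c,b) of palindromic or anti-palindromic sequences in E(c,b) equals: 2^{(b−1)/2}·C((c−b−1)/2, (b−3)/2) if 2 ≤ b ≤ ⌈(c+1)/2⌉, c is even and b is odd; 2^{b/2}·C((c−b−1)/2, (b−2)/2) if 2 ≤ b ≤ ⌈(c+1)/2⌉, c is odd and b is even; and 0 otherwise. -/

import Mathlib

open Classical

/-- The number of sign changes in a finite sequence of integers. -/
def signChanges (l : List ℤ) : ℕ :=
  ((l.zip l.tail).filter (fun p => p.1 * p.2 < 0)).length

/-- The sum of the absolute values of the entries. -/
def absSum (l : List ℤ) : ℕ := (l.map Int.natAbs).sum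

/-- An even continued fraction representation: a nonempty even-length
sequence of nonzero integers. -/
def IsECF (l : List ℤ) : Prop :=
  l ≠ [] ∧ Even l.length ∧ ∀ x ∈ l, x ≠ 0

/-- Palindromic or anti-palindromic sequences. -/
def IsPalOrAnti (l : List ℤ) : Prop :=
  l.reverse = l ∨ l.reverse = l.map (fun x => -x)

/-- The set `E(c)` of even continued fractions with crossing number `c`. -/
def Ecross (c : ℕ) : Set (List ℤ) :=
  {l | IsECF l ∧ (2 * absSum l : ℤ) - signChanges l = c}

/-- The set `E(c,b)` of even continued fractions with crossing number `c`
and braid index `b`. -/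
def Eset (c b : ℕ) : Set (List ℤ) :=
  {l | IsECF l ∧ (2 * absSum l : ℤ) - signChanges l = c ∧
    (absSum l : ℤ) - signChanges l + 1 = b}

noncomputable def e (c b : ℕ) : ℕ := (Eset c b).ncard

noncomputable def eTot (c : ℕ) : ℕ := (Ecross c).ncard

noncomputable def ep (c b : ℕ) : ℕ := (Eset c b ∩ {l | IsPalOrAnti l}).ncard

noncomputable def epTot (c : ℕ) : ℕ := (Ecross c ∩ {l | IsPalOrAnti l}).ncard



lemma sc_cons_cons (x y : ℤ) (t : List ℤ) :
    signChanges (x :: y :: t) = (if x * y < 0 then 1 else 0) + signChanges (y :: t) := by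
  simp only [signChanges, List.tail, List.zip_cons_cons, List.filter_cons]
  by_cases h : x * y < 0
  · simp [h, Nat.add_comm]
  · simp [h]

lemma sc_nil : signChanges [] = 0 := rfl
lemma sc_single (x : ℤ) : signChanges [x] = 0 := rfl

lemma sc_append_cons (a : List ℤ) (y : ℤ) (t : List ℤ) :
    signChanges (a ++ y :: t) =
      signChanges a + signChanges (y :: t) + (if (a.getLastD y) * y < 0 then 1 else 0) := by
  induction a with
  | nil => simp [signChanges, not_lt.2 (mul_self_nonneg y)]
  | cons x a ih =>
    cases a with
    | nil =>
      simp only [List.nil_append, List.cons_append, sc_cons_cons, sc_single]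
      simp only [List.getLastD_cons, List.getLastD_nil]
      omega
    | cons x' a' =>
      simp only [List.cons_append, sc_cons_cons, ih, List.getLastD_cons] at *
      omega

lemma sc_map_neg (l : List ℤ) : signChanges (l.map (fun x => -x)) = signChanges l := by
  induction l with
  | nil => rfl
  | cons x l ih =>
    cases l with
    | nil => rfl
    | cons y t =>
      simp only [List.map_cons] at ih ⊢
      rw [sc_cons_cons, sc_cons_cons, ih]
      congr 1
      simp [neg_mul_neg]

lemma sc_reverse (l : List ℤ) : signChanges l.reverse = signChanges l := by
  induction l with
  | nil => rfl
  | cons x l ih =>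
    cases l with
    | nil => rfl
    | cons y t =>
      have : (x :: y :: t).reverse = (y :: t).reverse ++ x :: [] := by simp
      rw [this, sc_append_cons, ih, sc_cons_cons, sc_single]
      have hgl : ((y :: t).reverse).getLastD x = y := by
        rw [List.getLastD_eq_getLast?]
        simp [List.getLast?_reverse]
      rw [hgl]
      have : y * x < 0 ↔ x * y < 0 := by rw [mul_comm]
      simp only [this]
      omega

lemma absSum_append (a b : List ℤ) : absSum (a ++ b) = absSum a + absSum b := by
  simp [absSum]

lemma absSum_reverse (l : List ℤ) : absSum l.reverse = absSum l := by
  simp [absSum, List.sum_reverse]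

lemma absSum_map_neg (l : List ℤ) : absSum (l.map (fun x => -x)) = absSum l := by
  simp only [absSum, List.map_map]
  congr 1
  apply List.map_congr_left
  intro x _
  simp

lemma sc_le (l : List ℤ) : signChanges l + 1 ≤ l.length ∨ l = [] := by
  cases l with
  | nil => right; rfl
  | cons x t =>
    left
    have h1 : signChanges (x :: t) ≤ ((x::t).zip t).length := by
      exact (List.length_filter_le _ _)
    simp [List.length_zip] at h1
    simp
    omega

lemma length_le_absSum (l : List ℤ) (h : ∀ x ∈ l, x ≠ 0) : l.length ≤ absSum l := by
  induction l with
  | nil => simp [absSum]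
  | cons x t ih =>
    simp only [absSum, List.map_cons, List.sum_cons, List.length_cons]
    have hx : 1 ≤ x.natAbs := by
      have := h x (by simp); omega
    have := ih (fun z hz => h z (by simp [hz]))
    simp only [absSum] at this
    omega

def sgn (s : Bool) : ℤ := if s then 1 else -1

lemma sgn_ne (s : Bool) : sgn s ≠ 0 := by cases s <;> simp [sgn]
lemma sgn_natAbs (s : Bool) : (sgn s).natAbs = 1 := by cases s <;> simp [sgn]

lemma sc_cons_congr {x x' : ℤ} (hx : x ≠ 0) (hx' : x' ≠ 0) (h : 0 < x ↔ 0 < x')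
    (t : List ℤ) : signChanges (x :: t) = signChanges (x' :: t) := by
  cases t with
  | nil => rfl
  | cons y t' =>
    rw [sc_cons_cons, sc_cons_cons]
    congr 1
    have h1 := mul_neg_iff (a := x) (b := y)
    have h2 := mul_neg_iff (a := x') (b := y)
    by_cases hxy : x * y < 0 <;> by_cases hxy' : x' * y < 0 <;> simp [hxy, hxy'] <;> omega

def fromWord (s : Bool) (w : List (Fin 3)) : List ℤ :=
  match w with
  | [] => [sgn s]
  | c :: w =>
    if c = 0 then
      match fromWord s w with
      | [] => []
      | x :: t => (x + sgn s) :: t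
    else if c = 1 then
      sgn s :: fromWord s w
    else
      sgn s :: fromWord (!s) w

lemma fromWord_spec (w : List (Fin 3)) (s : Bool) :
    fromWord s w ≠ [] ∧
    (∀ z ∈ fromWord s w, z ≠ 0) ∧
    (0 < (fromWord s w).headI ↔ s = true) ∧
    absSum (fromWord s w) = w.length + 1 ∧
    signChanges (fromWord s w) = w.count 2 := by
  induction w generalizing s with
  | nil =>
    cases s <;>
      simp [fromWord, sgn, absSum, signChanges]
  | cons c w ih =>
    obtain ⟨h1, h2, h3, h4, h5⟩ := ih s
    obtain ⟨g1, g2, g3, g4, g5⟩ := ih (!s)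
    obtain ⟨x, t, hxt⟩ := List.exists_cons_of_ne_nil h1
    have hx0 : x ≠ 0 := h2 x (by rw [hxt]; exact List.mem_cons_self)
    have hxs : 0 < x ↔ s = true := by rw [hxt] at h3; simpa using h3
    obtain ⟨y, u, hyu⟩ := List.exists_cons_of_ne_nil g1
    have hy0 : y ≠ 0 := g2 y (by rw [hyu]; exact List.mem_cons_self)
    have hys : 0 < y ↔ (!s) = true := by rw [hyu] at g3; simpa using g3
    have hc : c = 0 ∨ c = 1 ∨ c = 2 := by revert c; decide
    rcases hc with rfl | rfl | rfl
    · -- c = 0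
      have heq : fromWord s (0 :: w) = (x + sgn s) :: t := by
        rw [fromWord, hxt]; simp
      have hsum : (x + sgn s) ≠ 0 ∧ (0 < x + sgn s ↔ s = true) ∧
          (x + sgn s).natAbs = x.natAbs + 1 := by
        cases s <;> simp [sgn] at hxs ⊢ <;> omega
      refine ⟨by simp [heq], ?_, ?_, ?_, ?_⟩
      · intro z hz
        rw [heq] at hz
        rcases List.mem_cons.mp hz with rfl | hz
        · exact hsum.1
        · exact h2 z (by rw [hxt]; exact List.mem_cons_of_mem _ hz)
      · rw [heq]; simpa using hsum.2.1
      · rw [heq]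
        simp only [absSum, List.map_cons, List.sum_cons, hsum.2.2]
        rw [hxt] at h4
        simp only [absSum, List.map_cons, List.sum_cons] at h4
        simp [List.count_cons]
        omega
      · rw [heq]
        rw [sc_cons_congr (x := x + sgn s) (x' := x) hsum.1 hx0 (by rw [hsum.2.1, hxs]) t]
        rw [← hxt, h5]
        simp [List.count_cons]
    · -- c = 1
      have heq : fromWord s (1 :: w) = sgn s :: fromWord s w := by
        rw [fromWord]; simp
      refine ⟨by simp [heq], ?_, ?_, ?_, ?_⟩
      · intro z hz
        rw [heq] at hz
        rcases List.mem_cons.mp hz with rfl | hz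
        · exact sgn_ne s
        · exact h2 z hz
      · rw [heq]; cases s <;> simp [sgn]
      · rw [heq]
        simp only [absSum, List.map_cons, List.sum_cons, sgn_natAbs]
        simp only [absSum] at h4
        simp [List.count_cons]
        omega
      · rw [heq, hxt, sc_cons_cons]
        have : ¬ (sgn s * x < 0) := by
          cases s <;> simp [sgn] at hxs ⊢ <;> omega
        rw [if_neg this, ← hxt, h5]
        simp [List.count_cons]
    · -- c = 2
      have heq : fromWord s (2 :: w) = sgn s :: fromWord (!s) w := by
        rw [fromWord]; simp
      refine ⟨by simp [heq], ?_, ?_, ?_, ?_⟩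
      · intro z hz
        rw [heq] at hz
        rcases List.mem_cons.mp hz with rfl | hz
        · exact sgn_ne s
        · exact g2 z hz
      · rw [heq]; cases s <;> simp [sgn]
      · rw [heq]
        simp only [absSum, List.map_cons, List.sum_cons, sgn_natAbs]
        simp only [absSum] at g4
        simp [List.count_cons]
        omega
      · rw [heq, hyu, sc_cons_cons]
        have : (sgn s * y < 0) := by
          cases s <;> simp [sgn] at hys ⊢ <;> omega
        rw [if_pos this, ← hyu, g5]
        simp [List.count_cons]
        omega

lemma fromWord_cons0 (s : Bool) (w : List (Fin 3)) {x : ℤ} {t : List ℤ}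
    (hxt : fromWord s w = x :: t) : fromWord s (0 :: w) = (x + sgn s) :: t := by
  rw [fromWord, hxt]; simp

lemma fromWord_cons1 (s : Bool) (w : List (Fin 3)) :
    fromWord s (1 :: w) = sgn s :: fromWord s w := by
  rw [fromWord]; simp

lemma fromWord_cons2 (s : Bool) (w : List (Fin 3)) :
    fromWord s (2 :: w) = sgn s :: fromWord (!s) w := by
  rw [fromWord]; simp

lemma fromWord_replicate (s : Bool) (k : ℕ) (w : List (Fin 3)) :
    fromWord s (List.replicate k 0 ++ w)
      = ((fromWord s w).headI + (k : ℤ) * sgn s) :: (fromWord s w).tail := by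
  induction k with
  | zero =>
    obtain ⟨x, t, hxt⟩ := List.exists_cons_of_ne_nil (fromWord_spec w s).1
    simp [hxt]
  | succ k ih =>
    rw [List.replicate_succ, List.cons_append,
      fromWord_cons0 s (List.replicate k 0 ++ w) ih]
    congr 1
    push_cast
    ring

def toWord : List ℤ → List (Fin 3)
  | [] => []
  | [x] => List.replicate (x.natAbs - 1) 0
  | x :: y :: t =>
      List.replicate (x.natAbs - 1) 0 ++ (if x * y < 0 then (2 : Fin 3) else 1) :: toWord (y :: t)

lemma toWord_single (x : ℤ) : toWord [x] = List.replicate (x.natAbs - 1) 0 := rfl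

lemma toWord_cons_cons (x y : ℤ) (t : List ℤ) :
    toWord (x :: y :: t) =
      List.replicate (x.natAbs - 1) 0 ++ (if x * y < 0 then (2 : Fin 3) else 1) :: toWord (y :: t) :=
  rfl

lemma fromWord_toWord (h : List ℤ) (hne : h ≠ []) (hnz : ∀ x ∈ h, x ≠ 0) (s : Bool)
    (hs : 0 < h.headI ↔ s = true) : fromWord s (toWord h) = h := by
  induction h generalizing s with
  | nil => exact absurd rfl hne
  | cons x t ih =>
    have hx : x ≠ 0 := hnz x (List.mem_cons_self)
    have hsx : 0 < x ↔ s = true := by simpa using hs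
    have hxval : sgn s + (↑(x.natAbs - 1) : ℤ) * sgn s = x := by
      cases s <;> simp [sgn] at hsx ⊢ <;> omega
    cases t with
    | nil =>
      rw [toWord_single,
        show List.replicate (x.natAbs - 1) (0 : Fin 3)
          = List.replicate (x.natAbs - 1) 0 ++ [] by simp,
        fromWord_replicate]
      simp only [fromWord, List.headI, List.tail]
      rw [show sgn s + ↑(x.natAbs - 1) * sgn s = x from hxval]
    | cons y u =>
      have hy : y ≠ 0 := hnz y (by simp)
      have hW : fromWord s ((if x * y < 0 then (2 : Fin 3) else 1) :: toWord (y :: u))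
          = sgn s :: y :: u := by
        by_cases hxy : x * y < 0
        · have hm := mul_neg_iff.mp hxy
          have hsy : 0 < y ↔ (!s) = true := by
            cases s <;> simp at hsx ⊢ <;> omega
          have hrec : fromWord (!s) (toWord (y :: u)) = y :: u :=
            ih (by simp) (fun z hz => hnz z (List.mem_cons_of_mem _ hz)) (!s) (by simpa using hsy)
          rw [if_pos hxy, fromWord_cons2, hrec]
        · have hxy' : 0 < x * y := lt_of_le_of_ne (not_lt.mp hxy) (by
            intro hcon
            rcases mul_eq_zero.mp hcon.symm with h | h
            exacts [hx h, hy h])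
          have hm := mul_pos_iff.mp hxy'
          have hsy : 0 < y ↔ s = true := by
            cases s <;> simp at hsx ⊢ <;> omega
          have hrec : fromWord s (toWord (y :: u)) = y :: u :=
            ih (by simp) (fun z hz => hnz z (List.mem_cons_of_mem _ hz)) s (by simpa using hsy)
          rw [if_neg hxy, fromWord_cons1, hrec]
      rw [toWord_cons_cons, fromWord_replicate, hW]
      simp only [List.headI, List.tail]
      rw [show sgn s + ↑(x.natAbs - 1) * sgn s = x from hxval]

lemma toWord_fromWord (w : List (Fin 3)) (s : Bool) : toWord (fromWord s w) = w := by
  induction w generalizing s with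
  | nil =>
    cases s <;> simp [fromWord, toWord_single, sgn]
  | cons c w ih =>
    obtain ⟨h1, h2, h3, h4, h5⟩ := fromWord_spec w s
    obtain ⟨x, t, hxt⟩ := List.exists_cons_of_ne_nil h1
    have hx0 : x ≠ 0 := h2 x (by rw [hxt]; exact List.mem_cons_self)
    have hxs : 0 < x ↔ s = true := by rw [hxt] at h3; simpa using h3
    have hc : c = 0 ∨ c = 1 ∨ c = 2 := by revert c; decide
    rcases hc with rfl | rfl | rfl
    · have heq : fromWord s (0 :: w) = (x + sgn s) :: t := fromWord_cons0 s w hxt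
      have habs : (x + sgn s).natAbs = x.natAbs + 1 ∧ (0 < x + sgn s ↔ 0 < x) := by
        cases s <;> simp [sgn] at hxs ⊢ <;> omega
      have hx1 : x.natAbs + 1 - 1 = (x.natAbs - 1) + 1 := by omega
      rw [heq]
      cases t with
      | nil =>
        rw [toWord_single, habs.1, hx1, List.replicate_succ]
        have : toWord [x] = List.replicate (x.natAbs - 1) 0 := toWord_single x
        rw [← this, ← hxt, ih]
      | cons y t' =>
        have hy0 : y ≠ 0 := h2 y (by rw [hxt]; simp)
        have hiff : ((x + sgn s) * y < 0) ↔ (x * y < 0) := by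
          rw [mul_neg_iff, mul_neg_iff]
          have := habs.2
          constructor <;> rintro (⟨a, b⟩ | ⟨a, b⟩) <;> omega
        rw [toWord_cons_cons, habs.1, hx1, List.replicate_succ, if_congr hiff rfl rfl]
        rw [List.cons_append, ← toWord_cons_cons, ← hxt, ih]
    · rw [fromWord_cons1, hxt, toWord_cons_cons, sgn_natAbs]
      have : ¬ (sgn s * x < 0) := by
        cases s <;> simp [sgn] at hxs ⊢ <;> omega
      rw [if_neg this]
      simp only [Nat.sub_self, List.replicate_zero, List.nil_append]
      rw [← hxt, ih]
    · obtain ⟨g1, g2, g3, g4, g5⟩ := fromWord_spec w (!s)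
      obtain ⟨y, u, hyu⟩ := List.exists_cons_of_ne_nil g1
      have hy0 : y ≠ 0 := g2 y (by rw [hyu]; exact List.mem_cons_self)
      have hys : 0 < y ↔ (!s) = true := by rw [hyu] at g3; simpa using g3
      rw [fromWord_cons2, hyu, toWord_cons_cons, sgn_natAbs]
      have : (sgn s * y < 0) := by
        cases s <;> simp [sgn] at hys ⊢ <;> omega
      rw [if_pos this]
      simp only [Nat.sub_self, List.replicate_zero, List.nil_append]
      rw [← hyu, ih]

def wordsF : ℕ → ℕ → Finset (List (Fin 3))
  | 0, L => if L = 0 then {[]} else ∅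
  | (n+1), L =>
      ((wordsF n L).image (List.cons 0) ∪ (wordsF n L).image (List.cons 1)) ∪
      (if L = 0 then ∅ else (wordsF n (L - 1)).image (List.cons 2))

lemma mem_wordsF (n L : ℕ) (w : List (Fin 3)) :
    w ∈ wordsF n L ↔ w.length = n ∧ w.count 2 = L := by
  induction n generalizing L w with
  | zero =>
    rw [wordsF]
    rcases w with _ | ⟨a, w'⟩ <;> by_cases hL : L = 0 <;> simp [hL] <;> omega
  | succ n ih =>
    rw [wordsF]
    simp only [Finset.mem_union, Finset.mem_image, ih]
    constructor
    · rintro ((⟨v, ⟨hv1, hv2⟩, rfl⟩ | ⟨v, ⟨hv1, hv2⟩, rfl⟩) | h)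
      · constructor
        · simp [hv1]
        · rw [List.count_cons]
          simp [hv2]
      · constructor
        · simp [hv1]
        · rw [List.count_cons]
          simp [hv2]
      · by_cases hL : L = 0
        · rw [if_pos hL] at h; exact absurd h (Finset.notMem_empty _)
        · rw [if_neg hL, Finset.mem_image] at h
          obtain ⟨v, hv, rfl⟩ := h
          rw [ih] at hv
          obtain ⟨hv1, hv2⟩ := hv
          constructor
          · simp [hv1]
          · rw [List.count_cons]
            simp [hv2]
            omega
    · rintro ⟨hlen, hcnt⟩
      rcases w with _ | ⟨a, v⟩
      · simp at hlen
      · have tri : ∀ b : Fin 3, b = 0 ∨ b = 1 ∨ b = 2 := by decide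
        have ha := tri a
        simp only [List.length_cons, Nat.succ.injEq] at hlen
        rcases ha with rfl | rfl | rfl
        · rw [List.count_cons] at hcnt
          simp at hcnt
          exact Or.inl (Or.inl ⟨v, ⟨hlen, hcnt⟩, rfl⟩)
        · rw [List.count_cons] at hcnt
          simp at hcnt
          exact Or.inl (Or.inr ⟨v, ⟨hlen, hcnt⟩, rfl⟩)
        · rw [List.count_cons] at hcnt
          simp at hcnt
          have hL : L ≠ 0 := by omega
          refine Or.inr ?_
          rw [if_neg hL]
          exact Finset.mem_image.mpr ⟨v, (ih (L-1) v).mpr ⟨hlen, by omega⟩, rfl⟩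

lemma cons_inj_fin3 (a : Fin 3) : Function.Injective (List.cons a) := by
  intro x y h; simpa using h

lemma card_wordsF (n L : ℕ) : (wordsF n L).card = 2 ^ (n - L) * Nat.choose n L := by
  induction n generalizing L with
  | zero =>
    rw [wordsF]
    by_cases hL : L = 0
    · simp [hL]
    · obtain ⟨m, rfl⟩ := Nat.exists_eq_succ_of_ne_zero hL
      simp
  | succ n ih =>
    have hd1 : Disjoint ((wordsF n L).image (List.cons 0)) ((wordsF n L).image (List.cons 1)) := by
      simp only [Finset.disjoint_left, Finset.mem_image]
      rintro w ⟨v, _, rfl⟩ ⟨v', _, h⟩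
      simp at h
    have hd2 : Disjoint (((wordsF n L).image (List.cons 0)) ∪ ((wordsF n L).image (List.cons 1)))
        (if L = 0 then ∅ else (wordsF n (L - 1)).image (List.cons 2)) := by
      by_cases hL : L = 0
      · simp [hL]
      · rw [if_neg hL]
        simp only [Finset.disjoint_left, Finset.mem_union, Finset.mem_image]
        rintro w (⟨v, _, rfl⟩ | ⟨v, _, rfl⟩) ⟨v', _, h⟩ <;> simp at h
    rw [wordsF, Finset.card_union_of_disjoint hd2, Finset.card_union_of_disjoint hd1,
      Finset.card_image_of_injective _ (cons_inj_fin3 0),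
      Finset.card_image_of_injective _ (cons_inj_fin3 1), ih]
    by_cases hL : L = 0
    · subst hL
      simp [pow_succ]
      ring
    · obtain ⟨m, rfl⟩ := Nat.exists_eq_succ_of_ne_zero hL
      rw [if_neg hL, Finset.card_image_of_injective _ (cons_inj_fin3 2), ih]
      simp only [Nat.succ_sub_one]
      rw [Nat.choose_succ_succ n m]
      rcases Nat.lt_or_ge n (m + 1) with hn | hn
      · have h1 : Nat.choose n (m + 1) = 0 := Nat.choose_eq_zero_of_lt hn
        have h2 : n - (m + 1) = 0 := by omega
        have h3 : (n + 1) - (m + 1) = n - m := by omega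
        rw [h1, h2, h3]
        ring
      · have h3 : (n + 1) - (m + 1) = n - m := by omega
        have h4 : n - m = (n - (m + 1)) + 1 := by omega
        rw [h3, h4, pow_succ]
        ring

lemma fromWordP_inj : Function.Injective (fun p : Bool × List (Fin 3) => fromWord p.1 p.2) := by
  rintro ⟨s, w⟩ ⟨s', w'⟩ h
  simp only at h
  have h3 := (fromWord_spec w s).2.2.1
  have h3' := (fromWord_spec w' s').2.2.1
  rw [h] at h3
  have hs : s = s' := by
    cases s <;> cases s' <;> simp_all
  subst hs
  have h2 : toWord (fromWord s w) = toWord (fromWord s w') := by rw [h]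
  rw [toWord_fromWord, toWord_fromWord] at h2
  rw [h2]

lemma card_F (S L : ℕ) (hS : 1 ≤ S) :
    {h : List ℤ | h ≠ [] ∧ (∀ x ∈ h, x ≠ 0) ∧ absSum h = S ∧ signChanges h = L}.ncard
      = 2 * (2 ^ (S - 1 - L) * Nat.choose (S - 1) L) := by
  have himg : {h : List ℤ | h ≠ [] ∧ (∀ x ∈ h, x ≠ 0) ∧ absSum h = S ∧ signChanges h = L}
      = (fun p : Bool × List (Fin 3) => fromWord p.1 p.2) ''
        ((Finset.univ ×ˢ wordsF (S - 1) L : Finset (Bool × List (Fin 3))) : Set (Bool × List (Fin 3))) := by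
    ext h
    constructor
    · rintro ⟨hne, hnz, habs, hsc⟩
      set s : Bool := decide (0 < h.headI) with hsdef
      have hrt : fromWord s (toWord h) = h :=
        fromWord_toWord h hne hnz s (by simp [hsdef])
      obtain ⟨_, _, _, h4, h5⟩ := fromWord_spec (toWord h) s
      rw [hrt] at h4 h5
      refine ⟨(s, toWord h), ?_, hrt⟩
      simp only [Finset.coe_product, Set.mem_prod, Finset.mem_coe, Finset.mem_univ, true_and]
      rw [mem_wordsF]
      constructor
      · omega
      · omega
    · rintro ⟨⟨s, w⟩, hmem, rfl⟩
      simp only [Finset.coe_product, Set.mem_prod, Finset.mem_coe, Finset.mem_univ, true_and] at hmem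
      rw [mem_wordsF] at hmem
      obtain ⟨h1, h2, _, h4, h5⟩ := fromWord_spec w s
      refine ⟨h1, h2, ?_, ?_⟩
      · show absSum (fromWord s w) = S
        omega
      · show signChanges (fromWord s w) = L
        omega
  rw [himg, Set.ncard_image_of_injective _ fromWordP_inj, Set.ncard_coe_finset,
    Finset.card_product, card_wordsF]
  simp


lemma sc_glue_pal (h : List ℤ) (hne : h ≠ []) (hnz : ∀ x ∈ h, x ≠ 0) :
    signChanges (h ++ h.reverse) = 2 * signChanges h := by
  have hrev : h.reverse ≠ [] := by simpa using hne
  obtain ⟨y, t, hyt⟩ := List.exists_cons_of_ne_nil hrev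
  have hy0 : y ≠ 0 := hnz y (by
    have : y ∈ h.reverse := by rw [hyt]; exact List.mem_cons_self
    simpa using this)
  have hgl : h.getLastD y = y := by
    rw [List.getLastD_eq_getLast?, ← List.head?_reverse, hyt]; rfl
  rw [hyt, sc_append_cons, hgl, if_neg (not_lt.2 (mul_self_nonneg y)), ← hyt, sc_reverse]
  omega

lemma sc_glue_anti (h : List ℤ) (hne : h ≠ []) (hnz : ∀ x ∈ h, x ≠ 0) :
    signChanges (h ++ (h.map (fun x => -x)).reverse) = 2 * signChanges h + 1 := by
  have hrev : h.reverse ≠ [] := by simpa using hne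
  obtain ⟨y, t, hyt⟩ := List.exists_cons_of_ne_nil hrev
  have hy0 : y ≠ 0 := hnz y (by
    have : y ∈ h.reverse := by rw [hyt]; exact List.mem_cons_self
    simpa using this)
  have hgl : h.getLastD (-y) = y := by
    rw [List.getLastD_eq_getLast?, ← List.head?_reverse, hyt]; rfl
  have hmap : (h.map (fun x => -x)).reverse = -y :: t.map (fun x => -x) := by
    rw [← List.map_reverse, hyt]; rfl
  have hneg : y * -y < 0 := by
    have := mul_self_pos.mpr hy0
    nlinarith
  rw [hmap, sc_append_cons, hgl, if_pos hneg]
  have : signChanges (-y :: t.map (fun x => -x)) = signChanges h := by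
    rw [show -y :: t.map (fun x => -x) = (y :: t).map (fun x => -x) from rfl,
      sc_map_neg, ← hyt, sc_reverse]
  rw [this]
  omega

lemma pal_decomp (l : List ℤ) (hlen : Even l.length) (hpal : l.reverse = l) :
    l = l.take (l.length / 2) ++ (l.take (l.length / 2)).reverse := by
  set m := l.length / 2 with hm
  have hmm : l.length - m = m := by obtain ⟨k, hk⟩ := hlen; omega
  have h1 : List.take m l.reverse = List.take m l := by rw [hpal]
  rw [List.take_reverse, hmm] at h1
  have h2 : l.drop m = (l.take m).reverse := by rw [← h1, List.reverse_reverse]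
  conv_lhs => rw [← List.take_append_drop m l]
  rw [h2]

lemma anti_decomp (l : List ℤ) (hlen : Even l.length) (hanti : l.reverse = l.map (fun x => -x)) :
    l = l.take (l.length / 2) ++ ((l.take (l.length / 2)).map (fun x => -x)).reverse := by
  set m := l.length / 2 with hm
  have hmm : l.length - m = m := by obtain ⟨k, hk⟩ := hlen; omega
  have h1 : List.take m l.reverse = (l.take m).map (fun x => -x) := by
    rw [hanti, List.map_take]
  rw [List.take_reverse, hmm] at h1
  have h2 : l.drop m = ((l.take m).map (fun x => -x)).reverse := by
    rw [← h1, List.reverse_reverse]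
  conv_lhs => rw [← List.take_append_drop m l]
  rw [h2]

lemma palGlue_inj : Function.Injective (fun h : List ℤ => h ++ h.reverse) := by
  intro a b h
  simp only at h
  have hlen : a.length = b.length := by
    have := congrArg List.length h
    simp at this
    omega
  exact (List.append_inj h hlen).1

lemma antiGlue_inj :
    Function.Injective (fun h : List ℤ => h ++ (h.map (fun x => -x)).reverse) := by
  intro a b h
  simp only at h
  have hlen : a.length = b.length := by
    have := congrArg List.length h
    simp at this
    omega
  exact (List.append_inj h hlen).1

lemma take_half_ne_nil (l : List ℤ) (hne : l ≠ []) (hev : Even l.length) :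
    l.take (l.length / 2) ≠ [] := by
  intro hcon
  have h0 : l.length ≠ 0 := by simpa using hne
  have h1 : (l.take (l.length / 2)).length = 0 := by rw [hcon]; rfl
  rw [List.length_take] at h1
  obtain ⟨k, hk⟩ := hev
  omega

lemma pal_image (c b S' L' : ℕ) (hS : c + 1 = 2 * S' + b) (hL : c + 2 = 2 * L' + 2 * b)
    (hc : Even c) :
    Eset c b ∩ {l | IsPalOrAnti l}
      = (fun h : List ℤ => h ++ h.reverse) ''
        {h : List ℤ | h ≠ [] ∧ (∀ x ∈ h, x ≠ 0) ∧ absSum h = S' ∧ signChanges h = L'} := by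
  ext l
  constructor
  · rintro ⟨⟨⟨hne, hev, hnz⟩, hc1, hc2⟩, hpal⟩
    have hhne : l.take (l.length / 2) ≠ [] := take_half_ne_nil l hne hev
    have hhnz : ∀ x ∈ l.take (l.length / 2), x ≠ 0 :=
      fun x hx => hnz x (List.Sublist.mem hx (List.take_sublist _ l))
    rcases hpal with hp | ha
    · have hdec := pal_decomp l hev hp
      set h := l.take (l.length / 2) with hh
      have habs : absSum l = 2 * absSum h := by
        conv_lhs => rw [hdec]
        rw [absSum_append, absSum_reverse]; omega
      have hsc : signChanges l = 2 * signChanges h := by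
        conv_lhs => rw [hdec]
        exact sc_glue_pal h hhne hhnz
      have hA : (absSum l : ℤ) = 2 * absSum h := by exact_mod_cast habs
      have hB : (signChanges l : ℤ) = 2 * signChanges h := by exact_mod_cast hsc
      exact ⟨h, ⟨hhne, hhnz, by omega, by omega⟩, hdec.symm⟩
    · exfalso
      have hdec := anti_decomp l hev ha
      set h := l.take (l.length / 2) with hh
      have habs : absSum l = 2 * absSum h := by
        conv_lhs => rw [hdec]
        rw [absSum_append, absSum_reverse, absSum_map_neg]; omega
      have hsc : signChanges l = 2 * signChanges h + 1 := by
        conv_lhs => rw [hdec]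
        exact sc_glue_anti h hhne hhnz
      have hA : (absSum l : ℤ) = 2 * absSum h := by exact_mod_cast habs
      have hB : (signChanges l : ℤ) = 2 * signChanges h + 1 := by exact_mod_cast hsc
      obtain ⟨k, hk⟩ := hc
      omega
  · rintro ⟨h, ⟨hne, hnz, habs, hsc⟩, rfl⟩
    simp only [Set.mem_inter_iff, Set.mem_setOf_eq]
    have hA : absSum (h ++ h.reverse) = 2 * absSum h := by
      rw [absSum_append, absSum_reverse]; omega
    have hB : signChanges (h ++ h.reverse) = 2 * signChanges h := sc_glue_pal h hne hnz
    have hA' : (absSum (h ++ h.reverse) : ℤ) = 2 * absSum h := by exact_mod_cast hA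
    have hB' : (signChanges (h ++ h.reverse) : ℤ) = 2 * signChanges h := by
      exact_mod_cast hB
    refine ⟨⟨⟨by simp [hne], ?_, ?_⟩, by omega, by omega⟩, ?_⟩
    · rw [List.length_append, List.length_reverse]
      exact ⟨h.length, rfl⟩
    · intro x hx
      rw [List.mem_append, List.mem_reverse, or_self] at hx
      exact hnz x hx
    · left
      simp [List.reverse_append]

lemma anti_image (c b S' L' : ℕ) (hS : c + 1 = 2 * S' + b) (hL : c + 1 = 2 * L' + 2 * b)
    (hc : Odd c) :
    Eset c b ∩ {l | IsPalOrAnti l}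
      = (fun h : List ℤ => h ++ (h.map (fun x => -x)).reverse) ''
        {h : List ℤ | h ≠ [] ∧ (∀ x ∈ h, x ≠ 0) ∧ absSum h = S' ∧ signChanges h = L'} := by
  ext l
  constructor
  · rintro ⟨⟨⟨hne, hev, hnz⟩, hc1, hc2⟩, hpal⟩
    have hhne : l.take (l.length / 2) ≠ [] := take_half_ne_nil l hne hev
    have hhnz : ∀ x ∈ l.take (l.length / 2), x ≠ 0 :=
      fun x hx => hnz x (List.Sublist.mem hx (List.take_sublist _ l))
    rcases hpal with hp | ha
    · exfalso
      have hdec := pal_decomp l hev hp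
      set h := l.take (l.length / 2) with hh
      have habs : absSum l = 2 * absSum h := by
        conv_lhs => rw [hdec]
        rw [absSum_append, absSum_reverse]; omega
      have hsc : signChanges l = 2 * signChanges h := by
        conv_lhs => rw [hdec]
        exact sc_glue_pal h hhne hhnz
      have hA : (absSum l : ℤ) = 2 * absSum h := by exact_mod_cast habs
      have hB : (signChanges l : ℤ) = 2 * signChanges h := by exact_mod_cast hsc
      obtain ⟨k, hk⟩ := hc
      omega
    · have hdec := anti_decomp l hev ha
      set h := l.take (l.length / 2) with hh
      have habs : absSum l = 2 * absSum h := by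
        conv_lhs => rw [hdec]
        rw [absSum_append, absSum_reverse, absSum_map_neg]; omega
      have hsc : signChanges l = 2 * signChanges h + 1 := by
        conv_lhs => rw [hdec]
        exact sc_glue_anti h hhne hhnz
      have hA : (absSum l : ℤ) = 2 * absSum h := by exact_mod_cast habs
      have hB : (signChanges l : ℤ) = 2 * signChanges h + 1 := by exact_mod_cast hsc
      exact ⟨h, ⟨hhne, hhnz, by omega, by omega⟩, hdec.symm⟩
  · rintro ⟨h, ⟨hne, hnz, habs, hsc⟩, rfl⟩
    simp only [Set.mem_inter_iff, Set.mem_setOf_eq]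
    have hA : absSum (h ++ (h.map (fun x => -x)).reverse) = 2 * absSum h := by
      rw [absSum_append, absSum_reverse, absSum_map_neg]; omega
    have hB : signChanges (h ++ (h.map (fun x => -x)).reverse) = 2 * signChanges h + 1 :=
      sc_glue_anti h hne hnz
    have hA' : (absSum (h ++ (h.map (fun x => -x)).reverse) : ℤ) = 2 * absSum h := by
      exact_mod_cast hA
    have hB' : (signChanges (h ++ (h.map (fun x => -x)).reverse) : ℤ)
        = 2 * signChanges h + 1 := by exact_mod_cast hB
    refine ⟨⟨⟨by simp [hne], ?_, ?_⟩, by omega, by omega⟩, ?_⟩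
    · rw [List.length_append, List.length_reverse, List.length_map]
      exact ⟨h.length, rfl⟩
    · intro x hx
      rw [List.mem_append, List.mem_reverse, List.mem_map] at hx
      rcases hx with hx | ⟨y, hy, rfl⟩
      · exact hnz x hx
      · simpa using hnz y hy
    · right
      rw [List.reverse_append, List.reverse_reverse, List.map_append, ← List.map_reverse]
      simp

lemma eset_facts {c b : ℕ} {l : List ℤ} (hl : l ∈ Eset c b) : 2 ≤ b ∧ 2 * b ≤ c + 2 := by
  obtain ⟨⟨hne, hev, hnz⟩, hc1, hc2⟩ := hl
  have h1 := sc_le l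
  rcases h1 with h1 | h1
  · have h2 := length_le_absSum l hnz
    omega
  · exact absurd h1 hne


theorem ep_closed_formula (c b : ℕ) :
    ep c b =
      if 2 ≤ b ∧ b ≤ (c + 2) / 2 ∧ Even c ∧ Odd b then
        2 ^ ((b - 1) / 2) * Nat.choose ((c - b - 1) / 2) ((b - 3) / 2)
      else if 2 ≤ b ∧ b ≤ (c + 2) / 2 ∧ Odd c ∧ Even b then
        2 ^ (b / 2) * Nat.choose ((c - b - 1) / 2) ((b - 2) / 2)
      else 0 := by
  by_cases hA : 2 ≤ b ∧ 2 * b ≤ c + 2 ∧ Even c ∧ Odd b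
  · obtain ⟨hb2, hbc, hc, hb⟩ := hA
    obtain ⟨u, hu⟩ := hc
    obtain ⟨v, hv⟩ := hb
    set S' := (c + 1 - b) / 2 with hS'def
    set L' := (c + 2 - 2 * b) / 2 with hL'def
    have hS : c + 1 = 2 * S' + b := by omega
    have hL : c + 2 = 2 * L' + 2 * b := by omega
    rw [if_pos ⟨hb2, by omega, ⟨u, hu⟩, ⟨v, hv⟩⟩]
    show (Eset c b ∩ {l | IsPalOrAnti l}).ncard = _
    rw [pal_image c b S' L' hS hL ⟨u, hu⟩, Set.ncard_image_of_injective _ palGlue_inj,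
      card_F S' L' (by omega)]
    have e1 : (b - 1) / 2 = S' - L' := by omega
    have e2 : (c - b - 1) / 2 = S' - 1 := by omega
    have e3 : (b - 3) / 2 = S' - 1 - L' := by omega
    have e4 : L' ≤ S' - 1 := by omega
    have e5 : S' - L' = (S' - 1 - L') + 1 := by omega
    rw [e1, e2, e3, Nat.choose_symm e4, e5, pow_succ]
    ring
  · by_cases hB : 2 ≤ b ∧ 2 * b ≤ c + 2 ∧ Odd c ∧ Even b
    · obtain ⟨hb2, hbc, hc, hb⟩ := hB
      obtain ⟨u, hu⟩ := hc
      obtain ⟨v, hv⟩ := hb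
      set S' := (c + 1 - b) / 2 with hS'def
      set L' := (c + 1 - 2 * b) / 2 with hL'def
      have hS : c + 1 = 2 * S' + b := by omega
      have hL : c + 1 = 2 * L' + 2 * b := by omega
      rw [if_neg (by rintro ⟨_, _, hec, _⟩; exact (Nat.not_even_iff_odd.mpr ⟨u, hu⟩) hec),
        if_pos ⟨hb2, by omega, ⟨u, hu⟩, ⟨v, hv⟩⟩]
      show (Eset c b ∩ {l | IsPalOrAnti l}).ncard = _
      rw [anti_image c b S' L' hS hL ⟨u, hu⟩, Set.ncard_image_of_injective _ antiGlue_inj,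
        card_F S' L' (by omega)]
      have e1 : b / 2 = S' - L' := by omega
      have e2 : (c - b - 1) / 2 = S' - 1 := by omega
      have e3 : (b - 2) / 2 = S' - 1 - L' := by omega
      have e4 : L' ≤ S' - 1 := by omega
      have e5 : S' - L' = (S' - 1 - L') + 1 := by omega
      rw [e1, e2, e3, Nat.choose_symm e4, e5, pow_succ]
      ring
    · have hempty : Eset c b ∩ {l | IsPalOrAnti l} = ∅ := by
        ext l
        simp only [Set.mem_inter_iff, Set.mem_empty_iff_false, iff_false, Set.mem_setOf_eq]
        rintro ⟨hl, hpal⟩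
        have hfacts := eset_facts hl
        obtain ⟨⟨hne, hev, hnz⟩, hc1, hc2⟩ := hl
        have hhne : l.take (l.length / 2) ≠ [] := take_half_ne_nil l hne hev
        have hhnz : ∀ x ∈ l.take (l.length / 2), x ≠ 0 :=
          fun x hx => hnz x (List.Sublist.mem hx (List.take_sublist _ l))
        rcases hpal with hp | ha
        · have hdec := pal_decomp l hev hp
          set h := l.take (l.length / 2) with hh
          have habs : absSum l = 2 * absSum h := by
            conv_lhs => rw [hdec]
            rw [absSum_append, absSum_reverse]; omega
          have hsc : signChanges l = 2 * signChanges h := by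
            conv_lhs => rw [hdec]
            exact sc_glue_pal h hhne hhnz
          have hA' : (absSum l : ℤ) = 2 * absSum h := by exact_mod_cast habs
          have hB' : (signChanges l : ℤ) = 2 * signChanges h := by exact_mod_cast hsc
          exact hA ⟨hfacts.1, hfacts.2, Nat.even_iff.mpr (by omega), Nat.odd_iff.mpr (by omega)⟩
        · have hdec := anti_decomp l hev ha
          set h := l.take (l.length / 2) with hh
          have habs : absSum l = 2 * absSum h := by
            conv_lhs => rw [hdec]
            rw [absSum_append, absSum_reverse, absSum_map_neg]; omega
          have hsc : signChanges l = 2 * signChanges h + 1 := by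
            conv_lhs => rw [hdec]
            exact sc_glue_anti h hhne hhnz
          have hA' : (absSum l : ℤ) = 2 * absSum h := by exact_mod_cast habs
          have hB' : (signChanges l : ℤ) = 2 * signChanges h + 1 := by exact_mod_cast hsc
          exact hB ⟨hfacts.1, hfacts.2, Nat.odd_iff.mpr (by omega), Nat.even_iff.mpr (by omega)⟩
      show (Eset c b ∩ {l | IsPalOrAnti l}).ncard = _
      rw [hempty, Set.ncard_empty]
      rw [if_neg (by rintro ⟨x1, x2, x3, x4⟩; exact hA ⟨x1, by omega, x3, x4⟩),
        if_neg (by rintro ⟨x1, x2, x3, x4⟩; exact hB ⟨x1, by omega, x3, x4⟩)]
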